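/- arXiv:2305.00312 — 2 statements merged into one kernel-verified Lean document; each statement's English description precedes it below -/
import Mathlib

section
/- Let m ≥ 1, let ε ≥ 0, let z ∈ ℝ^m be a reference point, and let Y* and Y_T be finite subsets of ℝ^m such that every point y in Y* ∪ Y_T satisfies 0 ≤ z_i − y_i ≤ 1 for every coordinate i ∈ {1,…,m}. Suppose that for every y* ∈ Y* there exists y ∈ Y_T with ‖y − y*‖ ≤ ε (Euclidean norm). Then the hypervolume indicators satisfy HV_z(Y*) − HV_z(Y_T) ≤ |Y*| · ((1+ε)^m − 1). -/
open MeasureTheory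
open scoped Classical

/-- The hypervolume indicator of a finite set `Y ⊆ ℝ^m` with respect to a reference point `z`:
the Lebesgue measure of the union over `y ∈ Y` of the axis-parallel boxes `∏ i, [y i, z i]`. -/
noncomputable def hypervolume {m : ℕ} (z : EuclideanSpace ℝ (Fin m))
    (Y : Finset (EuclideanSpace ℝ (Fin m))) : ENNReal :=
  volume (⋃ y ∈ Y, {x : EuclideanSpace ℝ (Fin m) | ∀ i, y i ≤ x i ∧ x i ≤ z i})

lemma hv_box_eq_preimage {m : ℕ} (y z : EuclideanSpace ℝ (Fin m)) :
    {x : EuclideanSpace ℝ (Fin m) | ∀ i, y i ≤ x i ∧ x i ≤ z i}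
      = ((MeasurableEquiv.toLp 2 (Fin m → ℝ)).symm) ⁻¹'
        (Set.univ.pi fun i => Set.Icc (y i) (z i)) := by
  ext x
  simp only [Set.mem_setOf_eq, Set.mem_preimage, Set.mem_pi, Set.mem_univ,
    Set.mem_Icc, forall_true_left]
  rfl

lemma hv_box_measurable {m : ℕ} (y z : EuclideanSpace ℝ (Fin m)) :
    MeasurableSet {x : EuclideanSpace ℝ (Fin m) | ∀ i, y i ≤ x i ∧ x i ≤ z i} := by
  rw [hv_box_eq_preimage]
  exact ((MeasurableEquiv.toLp 2 (Fin m → ℝ)).symm).measurable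
    (MeasurableSet.univ_pi fun i => measurableSet_Icc)

lemma hv_box_volume {m : ℕ} (y z : EuclideanSpace ℝ (Fin m)) :
    volume {x : EuclideanSpace ℝ (Fin m) | ∀ i, y i ≤ x i ∧ x i ≤ z i}
      = ENNReal.ofReal (∏ i, max 0 (z i - y i)) := by
  rw [hv_box_eq_preimage,
    (EuclideanSpace.volume_preserving_symm_measurableEquiv_toLp (Fin m)).measure_preimage
      ((MeasurableSet.univ_pi fun i => measurableSet_Icc).nullMeasurableSet),
    volume_pi_pi]
  rw [ENNReal.ofReal_prod_of_nonneg (fun i _ => le_max_left _ _)]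
  refine Finset.prod_congr rfl fun i _ => ?_
  rw [Real.volume_Icc]
  rcases le_total 0 (z i - y i) with h | h
  · rw [max_eq_right h]
  · rw [max_eq_left h, ENNReal.ofReal_of_nonpos h, ENNReal.ofReal_zero]

lemma hv_prod_aux (ε : ℝ) (hε : 0 ≤ ε) :
    ∀ (m : ℕ) (c : Fin m → ℝ), (∀ i, 0 ≤ c i) → (∀ i, c i ≤ 1) →
      ∏ i, (c i + ε) ≤ ∏ i, c i + ((1 + ε) ^ m - 1) := by
  intro m
  induction m with
  | zero => simp
  | succ n ih =>
    intro c hc0 hc1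
    have h0 := ih (fun i => c i.succ) (fun i => hc0 _) (fun i => hc1 _)
    rw [Fin.prod_univ_succ, Fin.prod_univ_succ]
    have hQ0 : (0:ℝ) ≤ ∏ i : Fin n, c i.succ :=
      Finset.prod_nonneg fun i _ => hc0 _
    have hQ1 : ∏ i : Fin n, c i.succ ≤ 1 :=
      Finset.prod_le_one (fun i _ => hc0 _) (fun i _ => hc1 _)
    have hP0 : (0:ℝ) ≤ ∏ i : Fin n, (c i.succ + ε) :=
      Finset.prod_nonneg fun i _ => by have := hc0 i.succ; linarith
    have hpow : (1:ℝ) ≤ (1 + ε) ^ n := one_le_pow₀ (by linarith)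
    have h1 := hc0 0
    have h2 := hc1 0
    have : (1 + ε) ^ (n + 1) = (1 + ε) * (1 + ε) ^ n := by ring
    nlinarith [mul_le_mul_of_nonneg_left h0 (by linarith : (0:ℝ) ≤ c 0 + ε)]

theorem hypervolume_gap_le_card_mul_pow
    (m : ℕ) (hm : 1 ≤ m) (ε : ℝ) (hε : 0 ≤ ε)
    (z : EuclideanSpace ℝ (Fin m))
    (Ystar YT : Finset (EuclideanSpace ℝ (Fin m)))
    (hbound : ∀ y ∈ Ystar ∪ YT, ∀ i, 0 ≤ z i - y i ∧ z i - y i ≤ 1)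
    (happrox : ∀ ystar ∈ Ystar, ∃ y ∈ YT, ‖y - ystar‖ ≤ ε) :
    hypervolume z Ystar - hypervolume z YT
      ≤ (Ystar.card : ENNReal) * ENNReal.ofReal ((1 + ε) ^ m - 1) := by
  classical
  set B : EuclideanSpace ℝ (Fin m) → Set (EuclideanSpace ℝ (Fin m)) :=
    fun y => {x : EuclideanSpace ℝ (Fin m) | ∀ i, y i ≤ x i ∧ x i ≤ z i} with hB
  -- choose approximating points
  have hg : ∀ y : EuclideanSpace ℝ (Fin m), ∃ w : EuclideanSpace ℝ (Fin m),
      y ∈ Ystar → (w ∈ YT ∧ ‖w - y‖ ≤ ε) := by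
    intro y
    by_cases hy : y ∈ Ystar
    · obtain ⟨w, hw1, hw2⟩ := happrox y hy
      exact ⟨w, fun _ => ⟨hw1, hw2⟩⟩
    · exact ⟨0, fun h => absurd h hy⟩
  choose g hgspec using hg
  -- coordinatewise bound from the Euclidean norm
  have coord : ∀ (v : EuclideanSpace ℝ (Fin m)) (i : Fin m), |v i| ≤ ‖v‖ := by
    intro v i
    rw [EuclideanSpace.norm_eq, ← Real.sqrt_sq_eq_abs]
    apply Real.sqrt_le_sqrt
    have : |v i| ^ 2 ≤ ∑ j, ‖v j‖ ^ 2 := by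
      have := Finset.single_le_sum (f := fun j => ‖v j‖ ^ 2)
        (fun j _ => sq_nonneg _) (Finset.mem_univ i)
      simpa [Real.norm_eq_abs, sq_abs] using this
    simpa [sq_abs] using this
  -- per-point bound on the volume of the difference of boxes
  have key : ∀ y ∈ Ystar, volume (B y \ B (g y)) ≤ ENNReal.ofReal ((1 + ε) ^ m - 1) := by
    intro y hy
    obtain ⟨hgmem, hgnorm⟩ := hgspec y hy
    have ha := fun i => hbound y (Finset.mem_union_left _ hy) i
    have hw := fun i => hbound (g y) (Finset.mem_union_right _ hgmem) i
    set a : Fin m → ℝ := fun i => z i - y i with haa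
    set c : Fin m → ℝ := fun i => z i - max (g y i) (y i) with hcc
    have hc0 : ∀ i, 0 ≤ c i := by
      intro i
      rcases max_cases (g y i) (y i) with ⟨h1, _⟩ | ⟨h1, _⟩ <;>
        simp only [hcc, h1] <;> [exact (hw i).1; exact (ha i).1]
    have hca : ∀ i, c i ≤ a i := fun i => by
      simp only [hcc, haa]; have := le_max_right (g y i) (y i); linarith
    have ha1 : ∀ i, a i ≤ 1 := fun i => (ha i).2
    have hac : ∀ i, a i ≤ c i + ε := by
      intro i
      have h1 : |(g y - y) i| ≤ ε := le_trans (coord _ i) hgnorm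
      have h2 : (g y - y) i = g y i - y i := rfl
      rw [h2] at h1
      rcases max_cases (g y i) (y i) with ⟨hm1, _⟩ | ⟨hm1, _⟩ <;>
        simp only [hcc, haa, hm1] <;> [skip; linarith] 
      · have := abs_le.mp h1; linarith [this.2]
    -- the intersection of the two boxes is a box
    have hinter : B y ∩ B (g y)
        = {x : EuclideanSpace ℝ (Fin m) | ∀ i, (fun i => max (g y i) (y i)) i ≤ x i ∧ x i ≤ z i} := by
      ext x
      simp only [hB, Set.mem_inter_iff, Set.mem_setOf_eq, ← forall_and, max_le_iff]
      constructor
      · intro h i; exact ⟨⟨(h i).2.1, (h i).1.1⟩, (h i).1.2⟩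
      · intro h i; exact ⟨⟨(h i).1.2, (h i).2⟩, (h i).1.1, (h i).2⟩
    have hdiff : B y \ B (g y) = B y \ (B y ∩ B (g y)) := by
      rw [Set.diff_self_inter]
    rw [hdiff, measure_diff Set.inter_subset_left
        ((hv_box_measurable _ z).inter (hv_box_measurable _ z)).nullMeasurableSet
        (by rw [hinter, hv_box_volume (WithLp.toLp 2 fun i => max (g y i) (y i)) z]; exact ENNReal.ofReal_ne_top)]
    rw [hinter, hv_box_volume, hv_box_volume (WithLp.toLp 2 fun i => max (g y i) (y i)) z]
    have hmaxa : (fun i => max 0 (z i - y i)) = a := by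
      funext i; exact max_eq_right (ha i).1
    have hmaxc : (fun i => max 0 (z i - max (g y i) (y i))) = c := by
      funext i; exact max_eq_right (hc0 i)
    simp only [WithLp.ofLp_toLp, hmaxa, hmaxc]
    have hpow : (0:ℝ) ≤ (1 + ε) ^ m - 1 := by
      have : (1:ℝ) ≤ (1 + ε) ^ m := one_le_pow₀ (by linarith)
      linarith
    rw [tsub_le_iff_left, ← ENNReal.ofReal_add
        (Finset.prod_nonneg fun i _ => hc0 i) hpow]
    apply ENNReal.ofReal_le_ofReal
    have h1 : ∏ i, a i ≤ ∏ i, (c i + ε) :=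
      Finset.prod_le_prod (fun i _ => (ha i).1) (fun i _ => hac i)
    have h2 := hv_prod_aux ε hε m c hc0 (fun i => le_trans (hca i) (ha1 i))
    linarith
  -- put everything together
  rw [tsub_le_iff_left]
  have hsub : (⋃ y ∈ Ystar, B y)
      ⊆ (⋃ y ∈ YT, B y) ∪ ⋃ y ∈ Ystar, (B y \ B (g y)) := by
    intro x hx
    simp only [Set.mem_iUnion, Set.mem_union] at hx ⊢
    obtain ⟨y, hy, hxy⟩ := hx
    by_cases hxg : x ∈ B (g y)
    · exact Or.inl ⟨g y, (hgspec y hy).1, hxg⟩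
    · exact Or.inr ⟨y, hy, hxy, hxg⟩
  calc hypervolume z Ystar
      ≤ volume ((⋃ y ∈ YT, B y) ∪ ⋃ y ∈ Ystar, (B y \ B (g y))) :=
        measure_mono hsub
    _ ≤ hypervolume z YT + volume (⋃ y ∈ Ystar, (B y \ B (g y))) :=
        measure_union_le _ _
    _ ≤ hypervolume z YT + ∑ y ∈ Ystar, volume (B y \ B (g y)) := by
        gcongr
        exact measure_biUnion_finset_le _ _
    _ ≤ hypervolume z YT + ∑ _y ∈ Ystar, ENNReal.ofReal ((1 + ε) ^ m - 1) := by
        gcongr with y hy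
        exact key y hy
    _ = hypervolume z YT + (Ystar.card : ENNReal) * ENNReal.ofReal ((1 + ε) ^ m - 1) := by
        rw [Finset.sum_const, nsmul_eq_mul]
end

section
/- Let m ≥ 1, let 0 ≤ ε ≤ 1, let z ∈ ℝ^m be a reference point, and let Y* and Y_T be finite subsets of ℝ^m such that every point y in Y* ∪ Y_T satisfies 0 ≤ z_i − y_i ≤ 1 for every coordinate i ∈ {1,…,m}. Suppose that for every y* ∈ Y* there exists y ∈ Y_T with ‖y − y*‖ ≤ ε (Euclidean norm). Then HV_z(Y*) − HV_z(Y_T) ≤ |Y*| · m · 2^{m−1} · ε; in particular the hypervolume gap is at most C·m·ε for the constant C = |Y*| · 2^{m−1}. -/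
open MeasureTheory
open scoped Classical

lemma euclid_box_volume {m : ℕ} (a b : Fin m → ℝ) :
    volume {x : EuclideanSpace ℝ (Fin m) | ∀ i, a i ≤ x i ∧ x i ≤ b i}
      = ∏ i, ENNReal.ofReal (b i - a i) := by
  have h : {x : EuclideanSpace ℝ (Fin m) | ∀ i, a i ≤ x i ∧ x i ≤ b i}
      = ((MeasurableEquiv.toLp 2 (Fin m → ℝ)).symm) ⁻¹' (Set.Icc a b) := by
    ext x
    simp [Set.mem_Icc, Pi.le_def, forall_and, MeasurableEquiv.coe_toLp_symm]
  rw [h, (EuclideanSpace.volume_preserving_symm_measurableEquiv_toLp (Fin m)).measure_preimage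
    measurableSet_Icc.nullMeasurableSet, Real.volume_Icc_pi]

lemma euclid_abs_coord_le_norm {m : ℕ} (x : EuclideanSpace ℝ (Fin m)) (i : Fin m) :
    |x i| ≤ ‖x‖ := by
  rw [EuclideanSpace.norm_eq]
  have h0 : |x i| = Real.sqrt (‖x i‖ ^ (2:ℕ)) := by
    rw [Real.sqrt_sq_eq_abs, Real.norm_eq_abs, abs_abs]
  rw [h0]
  exact Real.sqrt_le_sqrt
    (Finset.single_le_sum (f := fun j => ‖x j‖ ^ (2:ℕ)) (fun j _ => sq_nonneg _)
      (Finset.mem_univ i))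

theorem hypervolume_gap_le_linear_in_eps
    (m : ℕ) (hm : 1 ≤ m) (ε : ℝ) (hε0 : 0 ≤ ε) (hε1 : ε ≤ 1)
    (z : EuclideanSpace ℝ (Fin m))
    (Ystar YT : Finset (EuclideanSpace ℝ (Fin m)))
    (hbound : ∀ y ∈ Ystar ∪ YT, ∀ i, 0 ≤ z i - y i ∧ z i - y i ≤ 1)
    (happrox : ∀ ystar ∈ Ystar, ∃ y ∈ YT, ‖y - ystar‖ ≤ ε) :
    hypervolume z Ystar - hypervolume z YT
      ≤ ENNReal.ofReal ((Ystar.card : ℝ) * m * 2 ^ (m - 1) * ε) := by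
  -- the slab attached to a corner `a` and coordinate `i`
  set slab : EuclideanSpace ℝ (Fin m) → Fin m → Set (EuclideanSpace ℝ (Fin m)) :=
    fun a i => {x : EuclideanSpace ℝ (Fin m) |
      ∀ j, a j ≤ x j ∧ x j ≤ Function.update (fun j => z j) i (a i + ε) j} with hslab
  -- each slab has volume at most ε
  have hslabvol : ∀ a ∈ Ystar, ∀ i, volume (slab a i) ≤ ENNReal.ofReal ε := by
    intro a ha i
    rw [hslab]
    rw [euclid_box_volume (fun j => a j) (Function.update (fun j => z j) i (a i + ε))]
    rw [← Finset.mul_prod_erase _ _ (Finset.mem_univ i)]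
    have h1 : ENNReal.ofReal (Function.update (fun j => z j) i (a i + ε) i - a i)
        = ENNReal.ofReal ε := by simp
    rw [h1]
    calc ENNReal.ofReal ε *
        ∏ j ∈ Finset.univ.erase i,
          ENNReal.ofReal (Function.update (fun j => z j) i (a i + ε) j - a j)
        ≤ ENNReal.ofReal ε * 1 := by
          gcongr
          refine Finset.prod_le_one (fun j _ => zero_le) (fun j hj => ?_)
          rw [Function.update_of_ne (Finset.ne_of_mem_erase hj)]
          exact ENNReal.ofReal_le_one.2 ((hbound a (Finset.mem_union_left _ ha) j).2)
      _ = ENNReal.ofReal ε := mul_one _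
  -- the key covering
  have hcover : (⋃ y ∈ Ystar, {x : EuclideanSpace ℝ (Fin m) | ∀ i, y i ≤ x i ∧ x i ≤ z i})
      ⊆ (⋃ y ∈ YT, {x : EuclideanSpace ℝ (Fin m) | ∀ i, y i ≤ x i ∧ x i ≤ z i})
        ∪ ⋃ a ∈ Ystar, ⋃ i, slab a i := by
    intro x hx
    simp only [Set.mem_iUnion] at hx
    obtain ⟨a, ha, hxa⟩ := hx
    obtain ⟨y, hy, hyd⟩ := happrox a ha
    by_cases hxy : ∀ i, y i ≤ x i ∧ x i ≤ z i
    · exact Or.inl (Set.mem_biUnion hy hxy)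
    · push_neg at hxy
      obtain ⟨i, hi⟩ := hxy
      have hxi : x i < y i := by
        by_contra h
        exact absurd (hxa i).2 (not_le.2 (hi (not_lt.1 h)))
      refine Or.inr (Set.mem_biUnion ha (Set.mem_iUnion.2 ⟨i, fun j => ?_⟩))
      refine ⟨(hxa j).1, ?_⟩
      rcases eq_or_ne j i with rfl | hji
      · rw [Function.update_self]
        have : y j - a j ≤ ε := by
          have := euclid_abs_coord_le_norm (y - a) j
          have h2 : (y - a) j = y j - a j := rfl
          rw [h2] at this
          linarith [le_abs_self (y j - a j), this, hyd]
        linarith [hxi.le]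
      · rw [Function.update_of_ne hji]
        exact (hxa j).2
  -- estimate the measure
  rw [hypervolume, hypervolume, tsub_le_iff_right]
  calc volume (⋃ y ∈ Ystar, {x : EuclideanSpace ℝ (Fin m) | ∀ i, y i ≤ x i ∧ x i ≤ z i})
      ≤ volume ((⋃ y ∈ YT, {x : EuclideanSpace ℝ (Fin m) | ∀ i, y i ≤ x i ∧ x i ≤ z i})
          ∪ ⋃ a ∈ Ystar, ⋃ i, slab a i) := measure_mono hcover
    _ ≤ volume (⋃ y ∈ YT, {x : EuclideanSpace ℝ (Fin m) | ∀ i, y i ≤ x i ∧ x i ≤ z i})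
          + volume (⋃ a ∈ Ystar, ⋃ i, slab a i) := measure_union_le _ _
    _ ≤ volume (⋃ y ∈ YT, {x : EuclideanSpace ℝ (Fin m) | ∀ i, y i ≤ x i ∧ x i ≤ z i})
          + ENNReal.ofReal ((Ystar.card : ℝ) * m * 2 ^ (m - 1) * ε) := by
        gcongr
        calc volume (⋃ a ∈ Ystar, ⋃ i, slab a i)
            ≤ ∑ a ∈ Ystar, volume (⋃ i, slab a i) := measure_biUnion_finset_le _ _
          _ ≤ ∑ a ∈ Ystar, ∑ i : Fin m, volume (slab a i) := by
              exact Finset.sum_le_sum fun a _ => measure_iUnion_fintype_le _ _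
          _ ≤ ∑ a ∈ Ystar, ∑ _i : Fin m, ENNReal.ofReal ε := by
              refine Finset.sum_le_sum fun a ha => Finset.sum_le_sum fun i _ => ?_
              exact hslabvol a ha i
          _ = (Ystar.card : ENNReal) * (m * ENNReal.ofReal ε) := by
              simp [Finset.sum_const, mul_assoc]
          _ ≤ ENNReal.ofReal ((Ystar.card : ℝ) * m * 2 ^ (m - 1) * ε) := by
              rw [← ENNReal.ofReal_natCast Ystar.card, ← ENNReal.ofReal_natCast m,
                ← ENNReal.ofReal_mul (by positivity), ← ENNReal.ofReal_mul (by positivity)]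
              refine ENNReal.ofReal_le_ofReal ?_
              have h2 : (1 : ℝ) ≤ 2 ^ (m - 1) := one_le_pow₀ (by norm_num)
              calc (Ystar.card : ℝ) * (m * ε) = (Ystar.card : ℝ) * m * ε * 1 := by ring
                _ ≤ (Ystar.card : ℝ) * m * ε * 2 ^ (m - 1) := by
                    have : (0:ℝ) ≤ (Ystar.card : ℝ) * m * ε := by positivity
                    nlinarith
                _ = (Ystar.card : ℝ) * m * 2 ^ (m - 1) * ε := by ring
    _ = ENNReal.ofReal ((Ystar.card : ℝ) * m * 2 ^ (m - 1) * ε)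
          + volume (⋃ y ∈ YT, {x : EuclideanSpace ℝ (Fin m) | ∀ i, y i ≤ x i ∧ x i ≤ z i}) := by
        rw [add_comm]
end
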